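/- For every even integer k ≥ 2, the limit as X → ∞ of the finite sums (−1)^{k/2} π^{−2k} Σ ∏_{i=1}^k d(|n_i|)/n_i exists, where the sum ranges over k-tuples of nonzero integers n_1, …, n_k with |n_i| ≤ X for all i and n_1 + ⋯ + n_k = 0. (This limit is denoted H_k.) -/

import Mathlib

open Finset Filter

/-- The truncated diagonal sum
`(-1)^(k/2) π^(-2k) ∑_{n₁,…,n_k ∈ [-X,X]∖{0}, n₁+⋯+n_k=0} ∏ d(|nᵢ|)/nᵢ`. -/
noncomputable def momentSum (k X : ℕ) : ℝ :=
  (-1 : ℝ) ^ (k / 2) / Real.pi ^ (2 * k) *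
    ∑ n ∈ Fintype.piFinset (fun _ : Fin k => Finset.Icc (-(X : ℤ)) (X : ℤ)),
      if (∀ i, n i ≠ 0) ∧ (∑ i, n i) = 0 then
        ∏ i, (((n i).natAbs.divisors.card : ℝ) / ((n i : ℝ)))
      else 0


lemma card_divisors_le_sqrt (n : ℕ) : (n.divisors.card : ℝ) ≤ 2 * Real.sqrt n := by
  rcases Nat.eq_zero_or_pos n with rfl | hn
  · simp
  have hcard : n.divisors.card = n.divisorsAntidiagonal.card := by
    rw [← Nat.map_div_right_divisors, Finset.card_map]
  have key : n.divisorsAntidiagonal.card ≤ (Finset.Icc 1 n.sqrt ×ˢ (Finset.univ : Finset Bool)).card := by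
    apply Finset.card_le_card_of_injOn (fun p => (min p.1 p.2, decide (p.1 ≤ p.2)))
    · intro p hp
      rw [Finset.mem_coe, Nat.mem_divisorsAntidiagonal] at hp
      have h1 : p.1 ≠ 0 := by rintro h; rw [h] at hp; simp at hp; omega
      have h2 : p.2 ≠ 0 := by rintro h; rw [h] at hp; simp at hp; omega
      simp only [Finset.mem_coe, Finset.mem_product, Finset.mem_Icc, Finset.mem_univ, and_true]
      constructor
      · exact le_min (Nat.one_le_iff_ne_zero.2 h1) (Nat.one_le_iff_ne_zero.2 h2)
      · rw [Nat.le_sqrt]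
        calc min p.1 p.2 * min p.1 p.2 ≤ p.1 * p.2 :=
              Nat.mul_le_mul (min_le_left _ _) (min_le_right _ _)
          _ = n := hp.1
    · intro p hp q hq hpq
      simp only [Finset.mem_coe, Nat.mem_divisorsAntidiagonal] at hp hq
      have h1 : p.1 ≠ 0 := by rintro h; rw [h] at hp; simp at hp; omega
      have q1 : q.1 ≠ 0 := by rintro h; rw [h] at hq; simp at hq; omega
      have h2 : p.2 ≠ 0 := by rintro h; rw [h] at hp; simp at hp; omega
      obtain ⟨hmin, hdec⟩ := Prod.mk.injEq _ _ _ _ ▸ hpq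
      by_cases hle : p.1 ≤ p.2
      · have hle' : q.1 ≤ q.2 := by
          by_contra hq'
          simp [hle, hq'] at hdec
        have e1 : p.1 = q.1 := by
          rw [min_eq_left hle, min_eq_left hle'] at hmin; exact hmin
        have e2 : p.2 = q.2 := by
          have := hp.1.trans hq.1.symm
          rw [e1] at this
          exact Nat.eq_of_mul_eq_mul_left (Nat.pos_of_ne_zero q1) this
        exact Prod.ext e1 e2
      · have hle' : ¬ q.1 ≤ q.2 := by
          by_contra hq'
          simp [hle, hq'] at hdec
        have e2 : p.2 = q.2 := by
          rw [min_eq_right (le_of_not_ge hle), min_eq_right (le_of_not_ge hle')] at hmin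
          exact hmin
        have e1 : p.1 = q.1 := by
          have := hp.1.trans hq.1.symm
          rw [e2] at this
          have q2 : q.2 ≠ 0 := by rintro h; rw [h] at hq; simp at hq; omega
          exact Nat.eq_of_mul_eq_mul_right (Nat.pos_of_ne_zero q2) this
        exact Prod.ext e1 e2
  have hc2 : (Finset.Icc 1 n.sqrt ×ˢ (Finset.univ : Finset Bool)).card = n.sqrt * 2 := by
    rw [Finset.card_product, Nat.card_Icc]
    simp
  have hsq : (n.sqrt : ℝ) ≤ Real.sqrt n := by
    rw [Real.le_sqrt (by positivity) (by positivity)]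
    exact_mod_cast Nat.sqrt_le' n
  calc (n.divisors.card : ℝ) ≤ ((n.sqrt * 2 : ℕ) : ℝ) := by
        rw [hcard]; exact_mod_cast hc2 ▸ key
    _ = 2 * (n.sqrt : ℝ) := by push_cast; ring
    _ ≤ 2 * Real.sqrt n := by linarith


lemma card_antidiag (n : ℕ) : n.divisorsAntidiagonal.card = n.divisors.card := by
  rw [← Nat.map_div_right_divisors, Finset.card_map]

lemma nat_w_summable {δ : ℝ} (hδ : 0 < δ) :
    Summable (fun n : ℕ => (n.divisors.card : ℝ) * (((n : ℝ) ^ (1 + δ))⁻¹)) := by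
  set g : ℕ → ℝ := fun a => ((a : ℝ) ^ (1 + δ))⁻¹ with hgdef
  have hg : Summable g := Real.summable_nat_rpow_inv.2 (by linarith)
  have hgnn : ∀ a, 0 ≤ g a := fun a => by positivity
  set c : ℝ := (∑' a : ℕ, g a) * (∑' a : ℕ, g a) with hc
  apply summable_of_sum_range_le (fun n => by positivity)
  intro N
  have step1 : ∀ n : ℕ, (n.divisors.card : ℝ) * (((n : ℝ) ^ (1 + δ))⁻¹)
      = ∑ p ∈ n.divisorsAntidiagonal, g p.1 * g p.2 := by
    intro n
    rcases Nat.eq_zero_or_pos n with rfl | hn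
    · simp
    have : ∀ p ∈ n.divisorsAntidiagonal, g p.1 * g p.2 = ((n : ℝ) ^ (1 + δ))⁻¹ := by
      intro p hp
      rw [Nat.mem_divisorsAntidiagonal] at hp
      have : ((p.1 : ℝ) * (p.2 : ℝ)) ^ (1 + δ) = (p.1 : ℝ) ^ (1 + δ) * (p.2 : ℝ) ^ (1 + δ) :=
        Real.mul_rpow (by positivity) (by positivity)
      rw [hgdef]
      simp only
      rw [← mul_inv, ← this, ← Nat.cast_mul, hp.1]
    rw [Finset.sum_congr rfl this, Finset.sum_const, card_antidiag, nsmul_eq_mul]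
  calc ∑ n ∈ range N, (n.divisors.card : ℝ) * (((n : ℝ) ^ (1 + δ))⁻¹)
      = ∑ n ∈ range N, ∑ p ∈ n.divisorsAntidiagonal, g p.1 * g p.2 := by
        exact Finset.sum_congr rfl fun n _ => step1 n
    _ = ∑ p ∈ (range N).biUnion Nat.divisorsAntidiagonal, g p.1 * g p.2 := by
        rw [Finset.sum_biUnion]
        intro a _ b _ hab
        simp only [Finset.disjoint_left]
        intro p hpa hpb
        rw [Nat.mem_divisorsAntidiagonal] at hpa hpb
        exact hab (hpa.1.symm.trans hpb.1)
    _ ≤ ∑ p ∈ range N ×ˢ range N, g p.1 * g p.2 := by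
        apply Finset.sum_le_sum_of_subset_of_nonneg
        · intro p hp
          simp only [Finset.mem_biUnion] at hp
          obtain ⟨n, hn, hp⟩ := hp
          rw [Nat.mem_divisorsAntidiagonal] at hp
          rw [Finset.mem_range] at hn
          rw [Finset.mem_product, Finset.mem_range, Finset.mem_range]
          constructor
          · exact lt_of_le_of_lt (Nat.le_of_dvd (Nat.pos_of_ne_zero hp.2) ⟨p.2, hp.1.symm⟩) hn
          · exact lt_of_le_of_lt (Nat.le_of_dvd (Nat.pos_of_ne_zero hp.2) ⟨p.1, by rw [mul_comm]; exact hp.1.symm⟩) hn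
        · intro p _ _
          exact mul_nonneg (hgnn _) (hgnn _)
    _ = (∑ a ∈ range N, g a) * (∑ a ∈ range N, g a) := by
        rw [Finset.sum_product]
        rw [← Finset.sum_mul_sum]
    _ ≤ c := by
        rw [hc]
        have h1 : ∑ a ∈ range N, g a ≤ ∑' a : ℕ, g a := Summable.sum_le_tsum _ (fun a _ => hgnn a) hg
        have h2 : 0 ≤ ∑ a ∈ range N, g a := Finset.sum_nonneg fun a _ => hgnn a
        nlinarith

noncomputable def w (δ : ℝ) (m : ℤ) : ℝ :=
  (m.natAbs.divisors.card : ℝ) * ((|(m : ℝ)| ^ (1 + δ))⁻¹)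

lemma w_nonneg (δ : ℝ) (m : ℤ) : 0 ≤ w δ m := by unfold w; positivity

lemma w_summable {δ : ℝ} (hδ : 0 < δ) : Summable (w δ) := by
  apply Summable.of_nat_of_neg
  · refine (nat_w_summable hδ).congr fun n => ?_
    unfold w
    simp
  · refine (nat_w_summable hδ).congr fun n => ?_
    unfold w
    simp





lemma pi_summable_fin {δ : ℝ} (hδ : 0 < δ) :
    ∀ m : ℕ, Summable (fun g : Fin m → ℤ => ∏ i, w δ (g i)) := by
  intro m
  induction m with
  | zero =>
      exact .of_finite
  | succ m ih =>
      have h := (w_summable hδ).mul_of_nonneg ih (fun a => w_nonneg δ a)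
        (fun g => Finset.prod_nonneg fun i _ => w_nonneg δ _)
      have he : Summable ((fun g : Fin (m+1) → ℤ => ∏ i, w δ (g i)) ∘
          (Fin.consEquiv (fun _ : Fin (m+1) => ℤ))) := by
        convert h using 1
        funext p
        simp only [Function.comp_apply, Fin.consEquiv_apply]
        rw [Fin.prod_univ_succ]; simp
      exact ((Fin.consEquiv (fun _ : Fin (m+1) => ℤ)).summable_iff).1 he

lemma pi_summable {ι : Type*} [Fintype ι] {δ : ℝ} (hδ : 0 < δ) :
    Summable (fun g : ι → ℤ => ∏ i, w δ (g i)) := by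
  classical
  let e := Fintype.equivFin ι
  have h := pi_summable_fin hδ (Fintype.card ι)
  have h2 : Summable ((fun g : Fin (Fintype.card ι) → ℤ => ∏ j, w δ (g j)) ∘
      (Equiv.arrowCongr e (Equiv.refl ℤ))) := ((Equiv.arrowCongr e (Equiv.refl ℤ)).summable_iff).2 h
  convert h2 using 1
  funext g
  simp only [Function.comp_apply, Equiv.arrowCongr_apply, Equiv.refl_apply, Function.comp]
  exact (Equiv.prod_comp e.symm (fun i => w δ (g i))).symm





noncomputable def del (k : ℕ) : ℝ := 1 / (2 * ((k : ℝ) - 1))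

lemma del_pos {k : ℕ} (hk : 2 ≤ k) : 0 < del k := by
  unfold del
  have : (2 : ℝ) ≤ (k : ℝ) := by exact_mod_cast hk
  apply div_pos one_pos
  linarith

lemma key_bound {k : ℕ} (hk : 2 ≤ k) (n : Fin k → ℤ) (hnz : ∀ i, n i ≠ 0) (j : Fin k)
    (hmax : ∀ i, |n i| ≤ |n j|) :
    |∏ i, ((n i).natAbs.divisors.card : ℝ) / ((n i : ℝ))| ≤
      2 * ∏ i ∈ univ.erase j, w (del k) (n i) := by
  have hδ := del_pos hk
  have h1 : ∀ i, (1 : ℝ) ≤ |((n i : ℤ) : ℝ)| := by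
    intro i
    have : (1 : ℤ) ≤ |n i| := Int.one_le_abs (hnz i)
    calc (1:ℝ) ≤ ((|n i| : ℤ) : ℝ) := by exact_mod_cast this
      _ = |((n i : ℤ) : ℝ)| := by push_cast; rfl
  have habs : |∏ i, ((n i).natAbs.divisors.card : ℝ) / ((n i : ℝ))|
      = ∏ i, ((n i).natAbs.divisors.card : ℝ) / |((n i : ℤ) : ℝ)| := by
    rw [Finset.abs_prod]
    exact Finset.prod_congr rfl fun i _ => by rw [abs_div, abs_of_nonneg (by positivity)]
  rw [habs]
  set a : ℝ := |((n j : ℤ) : ℝ)| with hadef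
  have ha : 1 ≤ a := h1 j
  have ha0 : 0 < a := lt_of_lt_of_le one_pos ha
  -- step A
  have hcast : ((n j).natAbs : ℝ) = a := by
    rw [hadef]
    push_cast
    rw [Nat.cast_natAbs]
    push_cast
    rfl
  have stepA : ((n j).natAbs.divisors.card : ℝ) / a ≤ 2 * a ^ (-(1/2) : ℝ) := by
    have hd := card_divisors_le_sqrt (n j).natAbs
    rw [hcast] at hd
    have key : a ^ (-(1/2) : ℝ) * a = Real.sqrt a := by
      have h2 : a ^ ((-(1/2)) + 1 : ℝ) = a ^ (-(1/2) : ℝ) * a ^ (1 : ℝ) := Real.rpow_add ha0 _ _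
      rw [Real.rpow_one] at h2
      norm_num at h2
      rw [Real.sqrt_eq_rpow]
      exact h2.symm
    have hs : 0 ≤ Real.sqrt a := Real.sqrt_nonneg a
    rw [div_le_iff₀ ha0]
    nlinarith
  have hcard : (univ.erase j).card = k - 1 := by
    rw [Finset.card_erase_of_mem (Finset.mem_univ j), Finset.card_univ, Fintype.card_fin]
  have hk1 : ((k - 1 : ℕ) : ℝ) = (k : ℝ) - 1 := by
    have : 1 ≤ k := by omega
    push_cast [Nat.cast_sub this]
    ring
  have hkne : (k : ℝ) - 1 ≠ 0 := by
    have : (2 : ℝ) ≤ (k : ℝ) := by exact_mod_cast hk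
    linarith
  have stepB : a ^ (-(1/2) : ℝ) = ∏ i ∈ univ.erase j, a ^ (-(del k)) := by
    rw [Finset.prod_const, hcard, ← Real.rpow_natCast (a ^ (-(del k))) (k-1),
      ← Real.rpow_mul (le_of_lt ha0)]
    congr 1
    rw [hk1]
    unfold del
    field_simp
  have stepC : ∏ i ∈ univ.erase j, a ^ (-(del k)) ≤ ∏ i ∈ univ.erase j, |((n i : ℤ) : ℝ)| ^ (-(del k)) := by
    apply Finset.prod_le_prod
    · intro i _
      positivity
    · intro i _
      apply Real.rpow_le_rpow_of_nonpos (lt_of_lt_of_le one_pos (h1 i)) _ (by linarith [hδ] : -(del k) ≤ 0)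
      rw [hadef]
      have := hmax i
      calc |((n i : ℤ) : ℝ)| = ((|n i| : ℤ) : ℝ) := by push_cast; rfl
        _ ≤ ((|n j| : ℤ) : ℝ) := by exact_mod_cast this
        _ = |((n j : ℤ) : ℝ)| := by push_cast; rfl
  have stepD : ∀ i, (((n i).natAbs.divisors.card : ℝ) / |((n i : ℤ) : ℝ)|) * |((n i : ℤ) : ℝ)| ^ (-(del k))
      = w (del k) (n i) := by
    intro i
    have hb : (0:ℝ) < |((n i : ℤ) : ℝ)| := lt_of_lt_of_le one_pos (h1 i)
    unfold w
    rw [Real.rpow_add hb, Real.rpow_one, Real.rpow_neg (le_of_lt hb)]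
    field_simp
  have hprodnn : (0:ℝ) ≤ ∏ i ∈ univ.erase j, ((n i).natAbs.divisors.card : ℝ) / |((n i : ℤ) : ℝ)| :=
    Finset.prod_nonneg fun i _ => by positivity
  calc ∏ i, ((n i).natAbs.divisors.card : ℝ) / |((n i : ℤ) : ℝ)|
      = (((n j).natAbs.divisors.card : ℝ) / a) *
        ∏ i ∈ univ.erase j, ((n i).natAbs.divisors.card : ℝ) / |((n i : ℤ) : ℝ)| := by
        rw [← Finset.mul_prod_erase univ _ (Finset.mem_univ j)]
    _ ≤ (2 * a ^ (-(1/2) : ℝ)) *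
        ∏ i ∈ univ.erase j, ((n i).natAbs.divisors.card : ℝ) / |((n i : ℤ) : ℝ)| :=
        mul_le_mul_of_nonneg_right stepA hprodnn
    _ = 2 * ((∏ i ∈ univ.erase j, a ^ (-(del k))) *
        ∏ i ∈ univ.erase j, ((n i).natAbs.divisors.card : ℝ) / |((n i : ℤ) : ℝ)|) := by
        rw [← stepB]; ring
    _ ≤ 2 * ((∏ i ∈ univ.erase j, |((n i : ℤ) : ℝ)| ^ (-(del k))) *
        ∏ i ∈ univ.erase j, ((n i).natAbs.divisors.card : ℝ) / |((n i : ℤ) : ℝ)|) := by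
        apply mul_le_mul_of_nonneg_left _ (by norm_num : (0:ℝ) ≤ 2)
        exact mul_le_mul_of_nonneg_right stepC hprodnn
    _ = 2 * ∏ i ∈ univ.erase j, w (del k) (n i) := by
        rw [← Finset.prod_mul_distrib]
        congr 1
        refine Finset.prod_congr rfl fun i _ => ?_
        rw [← stepD i]
        ring








section main
variable {k : ℕ}

/-- the majorant -/
noncomputable def G (k : ℕ) (j : Fin k) (n : Fin k → ℤ) : ℝ :=
  if n j = -∑ i ∈ univ.erase j, n i then 2 * ∏ i ∈ univ.erase j, w (del k) (n i) else 0

lemma G_nonneg (j : Fin k) (n : Fin k → ℤ) : 0 ≤ G k j n := by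
  unfold G
  split
  · exact mul_nonneg (by norm_num) (Finset.prod_nonneg fun i _ => w_nonneg _ _)
  · exact le_refl 0

lemma sum_subtype_erase (j : Fin k) (n : Fin k → ℤ) :
    ∑ i ∈ univ.erase j, n i = ∑ t : {i : Fin k // i ≠ j}, n t := by
  rw [Finset.sum_subtype (p := fun i => i ≠ j) (univ.erase j) (fun i => by simp [Finset.mem_erase]) n]

lemma G_summable (hk : 2 ≤ k) (j : Fin k) : Summable (G k j) := by
  classical
  set e : ({i : Fin k // i ≠ j} → ℤ) → (Fin k → ℤ) :=
    fun g i => if h : i = j then -∑ t : {i : Fin k // i ≠ j}, g t else g ⟨i, h⟩ with hedef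
  have he : Function.Injective e := by
    intro g g' hgg
    funext t
    have := congrFun hgg t.1
    simpa [hedef, t.2] using this
  have hrange : ∀ n ∉ Set.range e, G k j n = 0 := by
    intro n hn
    by_contra h0
    apply hn
    have hcond : n j = -∑ i ∈ univ.erase j, n i := by
      by_contra hc
      exact h0 (if_neg hc)
    refine ⟨fun t => n t.1, ?_⟩
    funext i
    by_cases h : i = j
    · have hei : e (fun t => n t.1) i = -∑ t : {i : Fin k // i ≠ j}, n t.1 := by
        simp [hedef, h]
      rw [hei, ← sum_subtype_erase j n, h]
      exact hcond.symm
    · simp [hedef, h]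
  have hcomp : Summable (G k j ∘ e) := by
    have hs : Summable (fun g : {i : Fin k // i ≠ j} → ℤ => 2 * ∏ t, w (del k) (g t)) :=
      (pi_summable (del_pos hk)).mul_left 2
    apply hs.congr
    intro g
    have hcond : e g j = -∑ i ∈ univ.erase j, e g i := by
      have h1 : e g j = -∑ t : {i : Fin k // i ≠ j}, g t := by simp [hedef]
      rw [h1, sum_subtype_erase]
      congr 1
      refine Finset.sum_congr rfl fun t _ => ?_
      simp [hedef, t.2]
    have h2 : ∀ t : {i : Fin k // i ≠ j}, e g t.1 = g t := fun t => by simp [hedef, t.2]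
    simp only [Function.comp_apply, G, if_pos hcond]
    rw [sum_subtype_erase] at hcond
    congr 1
    rw [Finset.prod_subtype (p := fun i => i ≠ j) (univ.erase j) (fun i => by simp [Finset.mem_erase]) (fun i => w (del k) (e g i))]
    exact Finset.prod_congr rfl fun t _ => by rw [h2 t]
  exact (Function.Injective.summable_iff he hrange).1 hcomp

lemma f_summable (hk : 2 ≤ k) :
    Summable (fun n : Fin k → ℤ =>
      if (∀ i, n i ≠ 0) ∧ (∑ i, n i) = 0 then
        ∏ i, (((n i).natAbs.divisors.card : ℝ) / ((n i : ℝ)))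
      else 0) := by
  classical
  have hG : Summable (fun n : Fin k → ℤ => ∑ j, G k j n) :=
    summable_sum fun j _ => G_summable hk j
  apply Summable.of_norm_bounded hG
  intro n
  rw [Real.norm_eq_abs]
  by_cases hcond : (∀ i, n i ≠ 0) ∧ (∑ i, n i) = 0
  · rw [if_pos hcond]
    obtain ⟨hnz, hsum⟩ := hcond
    have hne : (univ : Finset (Fin k)).Nonempty := by
      have : Nonempty (Fin k) := ⟨⟨0, by omega⟩⟩
      exact Finset.univ_nonempty
    obtain ⟨j, -, hj⟩ := Finset.exists_max_image univ (fun i => |n i|) hne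
    have hmax : ∀ i, |n i| ≤ |n j| := fun i => hj i (Finset.mem_univ i)
    have hb := key_bound hk n hnz j hmax
    have hcondj : n j = -∑ i ∈ univ.erase j, n i := by
      have := Finset.sum_erase_add univ n (Finset.mem_univ j)
      rw [hsum] at this
      linarith [this]
    calc |∏ i, ((n i).natAbs.divisors.card : ℝ) / ((n i : ℝ))|
        ≤ 2 * ∏ i ∈ univ.erase j, w (del k) (n i) := hb
      _ = G k j n := (if_pos hcondj).symm
      _ ≤ ∑ j', G k j' n :=
          Finset.single_le_sum (fun j' _ => G_nonneg j' n) (Finset.mem_univ j)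
  · rw [if_neg hcond]
    simpa using Finset.sum_nonneg fun j _ => G_nonneg j n

end main




theorem Hk_exists :
    ∀ k : ℕ, Even k → 2 ≤ k →
      ∃ H : ℝ, Tendsto (fun X => momentSum k X) atTop (nhds H) := by
  intro k _ hk
  classical
  set f : (Fin k → ℤ) → ℝ := fun n =>
    if (∀ i, n i ≠ 0) ∧ (∑ i, n i) = 0 then
      ∏ i, (((n i).natAbs.divisors.card : ℝ) / ((n i : ℝ)))
    else 0 with hfdef
  have hf : Summable f := f_summable hk
  set B : ℕ → Finset (Fin k → ℤ) :=
    fun X => Fintype.piFinset (fun _ : Fin k => Finset.Icc (-(X : ℤ)) (X : ℤ)) with hBdef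
  have hmono : Monotone B := by
    intro X Y hXY
    apply Fintype.piFinset_subset
    intro i
    apply Finset.Icc_subset_Icc
    · exact neg_le_neg (by exact_mod_cast hXY)
    · exact_mod_cast hXY
  have hcover : ∀ n : Fin k → ℤ, ∃ X : ℕ, n ∈ B X := by
    intro n
    refine ⟨Finset.univ.sup (fun i => (n i).natAbs), ?_⟩
    rw [hBdef, Fintype.mem_piFinset]
    intro i
    have h1 : (n i).natAbs ≤ Finset.univ.sup (fun i => (n i).natAbs) :=
      Finset.le_sup (f := fun i => (n i).natAbs) (Finset.mem_univ i)
    have h2 : |n i| ≤ ((Finset.univ.sup (fun i => (n i).natAbs) : ℕ) : ℤ) := by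
      rw [Int.abs_eq_natAbs]
      exact_mod_cast h1
    rw [Finset.mem_Icc]
    constructor
    · linarith [neg_abs_le (n i), abs_nonneg (n i)]
    · linarith [le_abs_self (n i)]
  have hB : Tendsto B atTop atTop := tendsto_atTop_finset_of_monotone hmono hcover
  have h1 : Tendsto (fun s : Finset (Fin k → ℤ) => ∑ n ∈ s, f n) atTop (nhds (∑' n, f n)) :=
    hf.hasSum
  refine ⟨(-1 : ℝ) ^ (k / 2) / Real.pi ^ (2 * k) * ∑' n, f n, ?_⟩
  have h2 : Tendsto (fun X => ∑ n ∈ B X, f n) atTop (nhds (∑' n, f n)) := h1.comp hB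
  have h3 := h2.const_mul ((-1 : ℝ) ^ (k / 2) / Real.pi ^ (2 * k))
  exact h3
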